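/- Let ε̃ and μ̃ be real symmetric positive-definite 2×2 matrices, and let U ⊆ ℝ² be a nonempty open set. Suppose that for every ξ ∈ U, (ξᵀε̃ξ)²·det(μ̃) = (ξᵀμ̃ξ)²·det(ε̃). Then there exists a > 0 such that μ̃ = a·ε̃. -/

import Mathlib

open Matrix

/-- If `(ξᵀε̃ξ)² det μ̃ = (ξᵀμ̃ξ)² det ε̃` on a nonempty open set of frequencies `ξ`,
then the tangential metrics `ε̃` and `μ̃` are conformal multiples: `μ̃ = a ε̃` with `a > 0`. -/
theorem conformal_of_quartic_ratio (ε' μ' : Matrix (Fin 2) (Fin 2) ℝ)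
    (hε : ε'.PosDef) (hμ : μ'.PosDef) (U : Set (Fin 2 → ℝ)) (hU : IsOpen U)
    (hne : U.Nonempty)
    (h : ∀ ξ ∈ U, (ξ ⬝ᵥ ε'.mulVec ξ) ^ 2 * μ'.det = (ξ ⬝ᵥ μ'.mulVec ξ) ^ 2 * ε'.det) :
    ∃ a : ℝ, 0 < a ∧ μ' = a • ε' := by
  obtain ⟨ξ₀, hξ₀⟩ := hne
  have hdε := hε.det_pos
  have hdμ := hμ.det_pos
  set c : ℝ := Real.sqrt (μ'.det / ε'.det) with hcdef
  have hcpos : 0 < c := Real.sqrt_pos.mpr (div_pos hdμ hdε)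
  have hc2 : c ^ 2 = μ'.det / ε'.det := Real.sq_sqrt (le_of_lt (div_pos hdμ hdε))
  -- pointwise identity of quadratic forms on U
  have key : ∀ ξ ∈ U, ξ ⬝ᵥ μ'.mulVec ξ = c * (ξ ⬝ᵥ ε'.mulVec ξ) := by
    intro ξ hξ
    have h1 := h ξ hξ
    have hεnn : 0 ≤ ξ ⬝ᵥ ε'.mulVec ξ := by
      have := hε.posSemidef.dotProduct_mulVec_nonneg ξ; simpa using this
    have hμnn : 0 ≤ ξ ⬝ᵥ μ'.mulVec ξ := by
      have := hμ.posSemidef.dotProduct_mulVec_nonneg ξ; simpa using this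
    have hsq : (ξ ⬝ᵥ μ'.mulVec ξ) ^ 2 = (c * (ξ ⬝ᵥ ε'.mulVec ξ)) ^ 2 := by
      have hεne : (ε'.det) ≠ 0 := ne_of_gt hdε
      field_simp [mul_pow, hc2] at h1 ⊢
      rw [hc2]; field_simp; linarith [h1]
    exact (sq_eq_sq₀ hμnn (mul_nonneg hcpos.le hεnn)).mp hsq
  -- the difference matrix
  set M : Matrix (Fin 2) (Fin 2) ℝ := μ' - c • ε' with hM
  have hMzero : ∀ ξ ∈ U, ξ ⬝ᵥ M.mulVec ξ = 0 := by
    intro ξ hξ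
    have := key ξ hξ
    simp only [hM, Matrix.sub_mulVec, Matrix.smul_mulVec, dotProduct_sub,
      dotProduct_smul, smul_eq_mul]
    linarith
  -- M has vanishing quadratic form everywhere
  have hQ : ∀ v : Fin 2 → ℝ, v ⬝ᵥ M.mulVec v = 0 := by
    intro v
    have hScont : Continuous fun t : ℝ => ξ₀ + t • v := by continuity
    have hSopen : IsOpen {t : ℝ | ξ₀ + t • v ∈ U} := hU.preimage hScont
    have h0mem : (0 : ℝ) ∈ {t : ℝ | ξ₀ + t • v ∈ U} := by simpa using hξ₀
    obtain ⟨δ, hδpos, hδ⟩ := Metric.isOpen_iff.mp hSopen 0 h0mem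
    set A := ξ₀ ⬝ᵥ M.mulVec ξ₀
    set B := ξ₀ ⬝ᵥ M.mulVec v + v ⬝ᵥ M.mulVec ξ₀
    set C := v ⬝ᵥ M.mulVec v
    have expand : ∀ t : ℝ, (ξ₀ + t • v) ⬝ᵥ M.mulVec (ξ₀ + t • v) = A + B * t + C * t ^ 2 := by
      intro t
      simp only [A, B, C, Matrix.mulVec_add, Matrix.mulVec_smul, dotProduct_add,
        add_dotProduct, dotProduct_smul, smul_dotProduct, smul_eq_mul]
      ring
    have hmem : ∀ t : ℝ, |t| < δ → A + B * t + C * t ^ 2 = 0 := by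
      intro t ht
      rw [← expand t]
      exact hMzero _ (hδ (by simpa [Real.dist_eq] using ht))
    have h0 : A = 0 := by have := hmem 0 (by simpa using hδpos); simpa using this
    have habs : |δ / 2| < δ := by rw [abs_of_pos (by linarith)]; linarith
    have habs' : |(-(δ / 2))| < δ := by rw [abs_neg]; exact habs
    have h1 := hmem (δ / 2) habs
    have h2 := hmem (-(δ / 2)) habs'
    have hδ2 : (δ / 2) ^ 2 > 0 := by positivity
    have hC : C = 0 := by nlinarith
    exact hC
  -- extract entries: M = 0
  have hMsymm : Mᵀ = M := by
    have h1 : ε'ᵀ = ε' := by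
      have := hε.isHermitian; rwa [Matrix.IsHermitian, Matrix.conjTranspose_eq_transpose_of_trivial] at this
    have h2 : μ'ᵀ = μ' := by
      have := hμ.isHermitian; rwa [Matrix.IsHermitian, Matrix.conjTranspose_eq_transpose_of_trivial] at this
    simp [hM, Matrix.transpose_sub, Matrix.transpose_smul, h1, h2]
  have hMeq : M = 0 := by
    have e00 := hQ ![1, 0]
    have e11 := hQ ![0, 1]
    have e01 := hQ ![1, 1]
    simp [dotProduct, Matrix.mulVec, Fin.sum_univ_two] at e00 e11 e01
    have hsym : M 1 0 = M 0 1 := by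
      have := congrFun (congrFun hMsymm 0) 1
      simpa [Matrix.transpose_apply] using this
    ext i j
    fin_cases i <;> fin_cases j <;>
      simp only [Fin.mk_zero, Fin.mk_one, Fin.isValue, Matrix.zero_apply] <;> linarith
  refine ⟨c, hcpos, ?_⟩
  have : μ' - c • ε' = 0 := hMeq
  linear_combination (norm := module) this
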